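/- Every graph with maximum degree at most 3 admits a red-blue vertex coloring such that the blue-induced subgraph has maximum degree at most 1 and the red-induced subgraph has maximum degree at most 1 (i.e., both color classes induce a matching plus isolated vertices). -/

import Mathlib

open Finset

/-- Every subcubic graph has a 2-coloring such that both color classes induce
subgraphs of maximum degree at most 1 (a matching plus isolated vertices). -/
theorem subcubic_two_matchings {V : Type*} [Fintype V] (G : SimpleGraph V)
    (hdeg : ∀ v, (G.neighborSet v).ncard ≤ 3) :
    ∃ c : V → Bool, ∀ v, {w | G.Adj v w ∧ c w = c v}.Subsingleton := by
  classical
  set m : (V → Bool) → ℕ := fun c =>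
    (univ.filter (fun p : V × V => G.Adj p.1 p.2 ∧ c p.1 = c p.2)).card with hm
  obtain ⟨c, -, hc⟩ := Finset.exists_min_image (univ : Finset (V → Bool)) m
    ⟨fun _ => true, mem_univ _⟩
  refine ⟨c, fun v => ?_⟩
  by_contra hns
  rw [Set.not_subsingleton_iff] at hns
  obtain ⟨w1, hw1, w2, hw2, hne⟩ := hns
  set c' : V → Bool := Function.update c v (!c v) with hc'
  -- key decomposition: monochromatic pairs = those away from v plus 2 * (mono nbrs of v)
  have key : ∀ d : V → Bool, m d =
      ((univ.filter (fun p : V × V => G.Adj p.1 p.2 ∧ d p.1 = d p.2)).filter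
        (fun p => p.1 ≠ v ∧ p.2 ≠ v)).card
      + 2 * (univ.filter (fun w => G.Adj v w ∧ d w = d v)).card := by
    intro d
    set S := univ.filter (fun p : V × V => G.Adj p.1 p.2 ∧ d p.1 = d p.2) with hS
    have hsplit := Finset.card_filter_add_card_filter_not
      (s := S) (p := fun p => p.1 ≠ v ∧ p.2 ≠ v)
    have h1 : S.filter (fun p => ¬(p.1 ≠ v ∧ p.2 ≠ v)) =
        S.filter (fun p => p.1 = v) ∪ S.filter (fun p => p.2 = v) := by
      rw [← Finset.filter_or]
      apply Finset.filter_congr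
      intro p _
      simp only [not_and_or, not_not]
    have hA : S.filter (fun p => p.1 = v) =
        (univ.filter (fun w => G.Adj v w ∧ d w = d v)).image (fun w => (v, w)) := by
      ext ⟨a, b⟩
      simp only [hS, mem_filter, mem_univ, true_and, mem_image, Prod.mk.injEq]
      constructor
      · rintro ⟨⟨hadj, heq⟩, rfl⟩
        exact ⟨b, ⟨hadj, heq.symm⟩, rfl, rfl⟩
      · rintro ⟨w, ⟨hadj, heq⟩, rfl, rfl⟩
        exact ⟨⟨hadj, heq.symm⟩, rfl⟩
    have hB : S.filter (fun p => p.2 = v) =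
        (univ.filter (fun w => G.Adj v w ∧ d w = d v)).image (fun w => (w, v)) := by
      ext ⟨a, b⟩
      simp only [hS, mem_filter, mem_univ, true_and, mem_image, Prod.mk.injEq]
      constructor
      · rintro ⟨⟨hadj, heq⟩, rfl⟩
        exact ⟨a, ⟨hadj.symm, heq⟩, rfl, rfl⟩
      · rintro ⟨w, ⟨hadj, heq⟩, rfl, rfl⟩
        exact ⟨⟨hadj.symm, heq⟩, rfl⟩
    have hdisj : Disjoint (S.filter (fun p => p.1 = v)) (S.filter (fun p => p.2 = v)) := by
      rw [Finset.disjoint_left]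
      rintro ⟨a, b⟩ ha hb
      simp only [hS, mem_filter, mem_univ, true_and] at ha hb
      obtain ⟨⟨hadj, -⟩, rfl⟩ := ha
      obtain ⟨-, rfl⟩ := hb
      exact G.loopless.irrefl _ hadj
    have hcard1 : (S.filter (fun p => p.1 = v)).card =
        (univ.filter (fun w => G.Adj v w ∧ d w = d v)).card := by
      rw [hA, Finset.card_image_of_injective _ (fun a b h => by simpa using h)]
    have hcard2 : (S.filter (fun p => p.2 = v)).card =
        (univ.filter (fun w => G.Adj v w ∧ d w = d v)).card := by
      rw [hB, Finset.card_image_of_injective _ (fun a b h => by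
        simpa using congrArg Prod.fst h)]
    have : (S.filter (fun p => ¬(p.1 ≠ v ∧ p.2 ≠ v))).card =
        2 * (univ.filter (fun w => G.Adj v w ∧ d w = d v)).card := by
      rw [h1, Finset.card_union_of_disjoint hdisj, hcard1, hcard2, two_mul]
    have hmd : m d = S.card := by simp only [hm, hS]
    rw [hmd, ← hsplit, this]
  -- the "away from v" part is unchanged by the flip
  have hBinv : ((univ.filter (fun p : V × V => G.Adj p.1 p.2 ∧ c' p.1 = c' p.2)).filter
        (fun p => p.1 ≠ v ∧ p.2 ≠ v)) =
      ((univ.filter (fun p : V × V => G.Adj p.1 p.2 ∧ c p.1 = c p.2)).filter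
        (fun p => p.1 ≠ v ∧ p.2 ≠ v)) := by
    ext ⟨a, b⟩
    simp only [mem_filter, mem_univ, true_and]
    constructor
    · rintro ⟨⟨hadj, heq⟩, ha, hb⟩
      rw [hc', Function.update_of_ne ha, Function.update_of_ne hb] at heq
      exact ⟨⟨hadj, heq⟩, ha, hb⟩
    · rintro ⟨⟨hadj, heq⟩, ha, hb⟩
      rw [hc', Function.update_of_ne ha, Function.update_of_ne hb]
      exact ⟨⟨hadj, heq⟩, ha, hb⟩
  -- the mono neighbors of v after the flip are the previously non-mono neighbors
  have hN' : univ.filter (fun w => G.Adj v w ∧ c' w = c' v) =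
      univ.filter (fun w => G.Adj v w ∧ c w ≠ c v) := by
    ext w
    simp only [mem_filter, mem_univ, true_and]
    constructor
    · rintro ⟨hadj, heq⟩
      have hwv : w ≠ v := fun h => G.loopless.irrefl v (h ▸ hadj)
      rw [hc', Function.update_of_ne hwv, Function.update_self] at heq
      exact ⟨hadj, by simp [heq]⟩
    · rintro ⟨hadj, hne'⟩
      have hwv : w ≠ v := fun h => G.loopless.irrefl v (h ▸ hadj)
      rw [hc', Function.update_of_ne hwv, Function.update_self]
      exact ⟨hadj, by revert hne'; cases c w <;> cases c v <;> simp⟩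
  -- degree bound: mono + non-mono neighbors ≤ 3
  have hdeg3 : (univ.filter (fun w => G.Adj v w ∧ c w = c v)).card +
      (univ.filter (fun w => G.Adj v w ∧ c w ≠ c v)).card ≤ 3 := by
    have hd : (G.neighborFinset v).card ≤ 3 := by
      have := hdeg v
      rwa [Set.ncard_eq_toFinset_card', ← SimpleGraph.neighborFinset_def] at this
    have hdisj : Disjoint (univ.filter (fun w => G.Adj v w ∧ c w = c v))
        (univ.filter (fun w => G.Adj v w ∧ c w ≠ c v)) := by
      rw [Finset.disjoint_left]
      intro w hw1 hw2
      simp only [mem_filter] at hw1 hw2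
      exact hw2.2.2 hw1.2.2
    have hsub : (univ.filter (fun w => G.Adj v w ∧ c w = c v)) ∪
        (univ.filter (fun w => G.Adj v w ∧ c w ≠ c v)) ⊆ G.neighborFinset v := by
      intro w hw
      simp only [mem_union, mem_filter] at hw
      rw [SimpleGraph.mem_neighborFinset]
      rcases hw with h | h
      · exact h.2.1
      · exact h.2.1
    calc _ = ((univ.filter (fun w => G.Adj v w ∧ c w = c v)) ∪
        (univ.filter (fun w => G.Adj v w ∧ c w ≠ c v))).card :=
          (Finset.card_union_of_disjoint hdisj).symm
      _ ≤ (G.neighborFinset v).card := Finset.card_le_card hsub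
      _ ≤ 3 := hd
  -- v has at least 2 mono neighbors
  have h2 : 2 ≤ (univ.filter (fun w => G.Adj v w ∧ c w = c v)).card := by
    apply Finset.one_lt_card.mpr
    refine ⟨w1, ?_, w2, ?_, hne⟩ <;> simp only [mem_filter, mem_univ, true_and]
    · exact hw1
    · exact hw2
  have hlt : m c' < m c := by
    rw [key c', key c, hBinv, hN']
    omega
  exact absurd (hc c' (mem_univ _)) (not_le.mpr hlt)
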